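/- Let U, V ⊆ ℝ^n be open, F : U → ℝ^p and G : V → ℝ^p differentiable maps, and φ : U → V a lipeomorphism such that F ≈ G via φ (i.e. F ≈_x G via φ at every point x ∈ U). Then φ(Sing(F)) = Sing(G), where Sing(F) = {x ∈ U : rank D_xF < p} is the set of singular points of F and D_xF denotes the total derivative of F at x. -/

import Mathlib

open Filter Set Metric Topology Asymptotics

noncomputable section

set_option synthInstance.maxHeartbeats 1000000

/-- `ℝ^n` with the Euclidean structure. -/
abbrev Eucl (n : ℕ) : Type := EuclideanSpace ℝ (Fin n)

variable {V W : Type*} [NormedAddCommGroup V] [NormedSpace ℝ V]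
  [NormedAddCommGroup W] [NormedSpace ℝ W]

/-- `F` admits the `α`-derivative `H` at `x`:  `H` is continuous and for every direction `v`,
`F (x + t v) - F x = t ^ α • H v + o(t ^ α)` as `t → 0⁺`. -/
def HasAlphaDerivAt (F : V → W) (x : V) (α : ℝ) (H : V → W) : Prop :=
  Continuous H ∧ ∀ v : V,
    Tendsto (fun t : ℝ => (t ^ α)⁻¹ • (F (x + t • v) - F x - t ^ α • H v))
      (𝓝[>] (0 : ℝ)) (𝓝 0)

/-- `F` has order `α` at `x`: for every nonzero direction `v` the limit of
`F (x + t v) / t ^ α` as `t → 0⁺` exists, and for at least one `v` it is nonzero. -/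
def HasOrderAt (F : V → W) (x : V) (α : ℝ) : Prop :=
  (∀ v : V, v ≠ 0 → ∃ L : W,
      Tendsto (fun t : ℝ => (t ^ α)⁻¹ • F (x + t • v)) (𝓝[>] (0 : ℝ)) (𝓝 L)) ∧
  ∃ v : V, v ≠ 0 ∧ ∃ L : W, L ≠ 0 ∧
      Tendsto (fun t : ℝ => (t ^ α)⁻¹ • F (x + t • v)) (𝓝[>] (0 : ℝ)) (𝓝 L)

/-- `φ` is a lipeomorphism from `U` onto `V'`. -/
def IsLipeoOn (φ : V → W) (U : Set V) (V' : Set W) : Prop :=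
  Set.BijOn φ U V' ∧ ∃ c : ℝ, 1 ≤ c ∧ ∀ x ∈ U, ∀ y ∈ U,
    (1 / c) * ‖x - y‖ ≤ ‖φ x - φ y‖ ∧ ‖φ x - φ y‖ ≤ c * ‖x - y‖

/-- `d` is a pseudo-Lipschitz derivative of `φ` at `x`: along some sequence `t_j → 0⁺`,
`(φ (x + t_j v) - φ x) / t_j → d v` uniformly on compact sets. -/
def IsPseudoLipDerivAt (φ : V → V) (x : V) (d : V → V) : Prop :=
  ∃ t : ℕ → ℝ, (∀ j, 0 < t j) ∧ Tendsto t atTop (𝓝 (0 : ℝ)) ∧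
    ∀ K : Set V, IsCompact K →
      TendstoUniformlyOn (fun j v => (t j)⁻¹ • (φ (x + t j • v) - φ x)) d atTop K

/-- `F ∼ G` at `x₀`: asymptotic equivalence of `F` and `G` at `x₀`. -/
def AsympEquivAt (F G : V → W) (x₀ : V) : Prop :=
  ∃ c₁ c₂ : ℝ, 0 < c₁ ∧ 0 < c₂ ∧
    ∀ᶠ x in 𝓝 x₀, c₂ * ‖F x‖ ≤ ‖G x‖ ∧ ‖G x‖ ≤ c₁ * ‖F x‖

/-- `F ≈ G` at `x₀` via the lipeomorphism `φ`. -/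
def AsympLipEquivAtVia {V' : Type*} [NormedAddCommGroup V'] [NormedSpace ℝ V']
    (F : V → W) (G : V' → W) (φ : V → V') (x₀ : V) : Prop :=
  ∃ c : ℝ, 1 ≤ c ∧ ∀ᶠ x in 𝓝 x₀,
    (1 / c) * ‖F x - F x₀‖ ≤ ‖G (φ x) - G (φ x₀)‖ ∧
      ‖G (φ x) - G (φ x₀)‖ ≤ c * ‖F x - F x₀‖

/-- The degree-`m` term of the Taylor series of `F` at `0`; for a `C^∞` germ of
finite order `m` this is its initial part `in(F)`. -/
def inPart (F : V → ℝ) (m : ℕ) : V → ℝ :=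
  fun x => (m.factorial : ℝ)⁻¹ • iteratedFDeriv ℝ m F 0 (fun _ => x)

/-- The set of singular points of `F` on `U`: points of `U` where the total derivative
has rank `< p`. -/
def SingSet {n p : ℕ} (F : Eucl n → Eucl p) (U : Set (Eucl n)) : Set (Eucl n) :=
  {x ∈ U | LinearMap.rank ((fderiv ℝ F x : Eucl n →L[ℝ] Eucl p) : Eucl n →ₗ[ℝ] Eucl p)
    < (p : Cardinal)}

open Module
open scoped ENNReal NNReal
set_option maxHeartbeats 1000000

lemma dimH_submodule {E : Type*} [NormedAddCommGroup E] [NormedSpace ℝ E]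
    [FiniteDimensional ℝ E] (S : Submodule ℝ E) : dimH (S : Set E) = finrank ℝ S := by
  have h : (S : Set E) = Subtype.val '' (univ : Set S) := by simp
  rw [h, isometry_subtype_coe.dimH_image, Real.dimH_univ_eq_finrank]

lemma infDist_ker_le {n p : ℕ} (B : Eucl n →L[ℝ] Eucl p) :
    ∃ α : ℝ, 0 < α ∧ ∀ w, infDist w (LinearMap.ker (B : Eucl n →ₗ[ℝ] Eucl p) : Set (Eucl n)) ≤ α * ‖B w‖ := by
  set K₂ := LinearMap.ker (B : Eucl n →ₗ[ℝ] Eucl p) with hK₂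
  set f := (B : Eucl n →ₗ[ℝ] Eucl p).domRestrict K₂ᗮ with hf
  have hker : LinearMap.ker f = ⊥ := by
    rw [LinearMap.ker_eq_bot']
    rintro ⟨w, hwS⟩ hw
    have hwK : w ∈ K₂ := by
      have : B w = 0 := by simpa [hf, LinearMap.domRestrict_apply] using hw
      exact LinearMap.mem_ker.2 this
    have : w = 0 := by
      have := (Submodule.orthogonal_disjoint K₂).le_bot ⟨hwK, hwS⟩
      simpa using this
    exact Subtype.ext this
  obtain ⟨K, hK0, hKa⟩ := f.exists_antilipschitzWith hker
  refine ⟨K, hK0, fun w => ?_⟩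
  set a := (K₂.orthogonalProjectionOnto w : Eucl n) with ha
  have haK : a ∈ K₂ := (K₂.orthogonalProjectionOnto w).2
  have hwa : w - a ∈ K₂ᗮ := K₂.sub_starProjection_mem_orthogonal w
  have h1 : infDist w (K₂ : Set _) ≤ ‖w - a‖ := by
    simpa [dist_eq_norm] using infDist_le_dist_of_mem (show a ∈ (K₂ : Set _) from haK)
  have h2 : ‖w - a‖ ≤ K * ‖f ⟨w - a, hwa⟩‖ := by
    have := hKa.le_mul_dist ⟨w - a, hwa⟩ 0
    simpa [dist_eq_norm] using this
  have h3 : (f ⟨w - a, hwa⟩ : Eucl p) = B w := by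
    simp [hf, LinearMap.domRestrict_apply, map_sub, LinearMap.mem_ker.1 haK]
  calc infDist w (K₂ : Set _) ≤ ‖w - a‖ := h1
    _ ≤ K * ‖B w‖ := by rw [← h3]; exact h2

lemma key_finrank_ker_le {n p : ℕ} {U : Set (Eucl n)} (hU : IsOpen U)
    {F G : Eucl n → Eucl p} {φ : Eucl n → Eucl n} {x₀ : Eucl n} (hx₀ : x₀ ∈ U)
    (hFd : DifferentiableAt ℝ F x₀) (hGd : DifferentiableAt ℝ G (φ x₀))
    {c : ℝ} (hc : 1 ≤ c)
    (hbl : ∀ x ∈ U, ∀ y ∈ U, (1/c) * ‖x - y‖ ≤ ‖φ x - φ y‖ ∧ ‖φ x - φ y‖ ≤ c * ‖x - y‖)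
    {c' : ℝ} (hev : ∀ᶠ x in 𝓝 x₀, ‖G (φ x) - G (φ x₀)‖ ≤ c' * ‖F x - F x₀‖) :
    finrank ℝ (LinearMap.ker (fderiv ℝ F x₀ : Eucl n →ₗ[ℝ] Eucl p)) ≤ finrank ℝ (LinearMap.ker (fderiv ℝ G (φ x₀) : Eucl n →ₗ[ℝ] Eucl p)) := by
  have hc0 : (0:ℝ) < c := lt_of_lt_of_le one_pos hc
  set y₀ := φ x₀ with hy₀
  set A := fderiv ℝ F x₀ with hA
  set B := fderiv ℝ G y₀ with hB
  set K₁ := LinearMap.ker (A : Eucl n →ₗ[ℝ] Eucl p) with hK₁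
  set K₂ := LinearMap.ker (B : Eucl n →ₗ[ℝ] Eucl p) with hK₂def
  set ψ : ℝ → Eucl n → Eucl n := fun t v => t⁻¹ • (φ (x₀ + t • v) - φ x₀) with hψ
  -- eventual membership of the segment in U
  have hlinet : ∀ v : Eucl n, Tendsto (fun t : ℝ => x₀ + t • v) (𝓝[>] 0) (𝓝 x₀) := by
    intro v
    have hco : Continuous fun t : ℝ => x₀ + t • v :=
      continuous_const.add (continuous_id.smul continuous_const)
    have := hco.tendsto 0
    simp only [zero_smul, add_zero] at this
    exact this.mono_left nhdsWithin_le_nhds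
  have hmemU : ∀ v : Eucl n, ∀ᶠ t in 𝓝[>] (0:ℝ), x₀ + t • v ∈ U := fun v =>
    (hlinet v).eventually (hU.eventually_mem hx₀)
  -- upper bound on ψ
  have hnorm_seg : ∀ (v : Eucl n) (t : ℝ), 0 < t → ‖x₀ + t • v - x₀‖ = t * ‖v‖ := by
    intro v t ht
    rw [add_sub_cancel_left, norm_smul, Real.norm_eq_abs, abs_of_pos ht]
  have hψbound : ∀ v : Eucl n, ∀ᶠ t in 𝓝[>] (0:ℝ), ‖ψ t v‖ ≤ c * ‖v‖ := by
    intro v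
    filter_upwards [hmemU v, self_mem_nhdsWithin] with t htU ht
    have ht : (0:ℝ) < t := ht
    have h2 := (hbl _ htU _ hx₀).2
    rw [hnorm_seg v t ht] at h2
    have : ‖ψ t v‖ = t⁻¹ * ‖φ (x₀ + t • v) - φ x₀‖ := by
      rw [hψ]; rw [norm_smul, Real.norm_eq_abs, abs_inv, abs_of_pos ht]
    rw [this]
    calc t⁻¹ * ‖φ (x₀ + t • v) - φ x₀‖ ≤ t⁻¹ * (c * (t * ‖v‖)) := by
          exact mul_le_mul_of_nonneg_left h2 (inv_nonneg.2 ht.le)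
      _ = c * ‖v‖ := by field_simp
  -- φ along segment tends to y₀
  have hφt : ∀ v : Eucl n, Tendsto (fun t => φ (x₀ + t • v)) (𝓝[>] (0:ℝ)) (𝓝 y₀) := by
    intro v
    rw [tendsto_iff_norm_sub_tendsto_zero]
    have hb : ∀ᶠ t in 𝓝[>] (0:ℝ), ‖φ (x₀ + t • v) - y₀‖ ≤ c * (t * ‖v‖) := by
      filter_upwards [hmemU v, self_mem_nhdsWithin] with t htU ht
      have h2 := (hbl _ htU _ hx₀).2
      rw [hnorm_seg v t ht] at h2
      exact h2
    have hg : Tendsto (fun t : ℝ => c * (t * ‖v‖)) (𝓝[>] (0:ℝ)) (𝓝 0) := by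
      have : Continuous fun t : ℝ => c * (t * ‖v‖) := by continuity
      have h0 := this.tendsto 0
      simp only [mul_zero, zero_mul] at h0
      exact h0.mono_left nhdsWithin_le_nhds
    exact squeeze_zero_norm' (by filter_upwards [hb] with t h using by simpa using h) hg
  -- Step A: for v ∈ K₁, B (ψ t v) → 0
  have hBz : ∀ v, A v = 0 → Tendsto (fun t => B (ψ t v)) (𝓝[>] (0:ℝ)) (𝓝 0) := by
    intro v hvker
    -- (a) F slope tends to 0
    have hFz : Tendsto (fun t : ℝ => t⁻¹ • (F (x₀ + t • v) - F x₀)) (𝓝[>] 0) (𝓝 0) := by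
      have := (hFd.hasFDerivAt.hasLineDerivAt v).tendsto_slope_zero_right
      rwa [hvker] at this
    -- (b) G ∘ φ slope tends to 0
    have hGz : Tendsto (fun t : ℝ => t⁻¹ • (G (φ (x₀ + t • v)) - G y₀)) (𝓝[>] 0) (𝓝 0) := by
      have hb : ∀ᶠ t in 𝓝[>] (0:ℝ),
          ‖t⁻¹ • (G (φ (x₀ + t • v)) - G y₀)‖ ≤ c' * ‖t⁻¹ • (F (x₀ + t • v) - F x₀)‖ := by
        filter_upwards [(hlinet v).eventually hev, self_mem_nhdsWithin] with t h ht
        have ht : (0:ℝ) < t := ht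
        rw [norm_smul, norm_smul, Real.norm_eq_abs, abs_inv, abs_of_pos ht, mul_comm c',
          mul_assoc]
        exact mul_le_mul_of_nonneg_left (by rw [mul_comm]; exact h) (inv_nonneg.2 ht.le)
      have hg : Tendsto (fun t : ℝ => c' * ‖t⁻¹ • (F (x₀ + t • v) - F x₀)‖) (𝓝[>] 0) (𝓝 0) := by
        have := (hFz.norm.const_mul c')
        simpa using this
      exact squeeze_zero_norm' hb hg
    -- (c) little-o remainder
    have ho : Tendsto (fun t : ℝ =>
        t⁻¹ • (G (φ (x₀ + t • v)) - G y₀ - B (φ (x₀ + t • v) - y₀))) (𝓝[>] 0) (𝓝 0) := by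
      have h1 : (fun y => G y - G y₀ - B (y - y₀)) =o[𝓝 y₀] fun y => y - y₀ :=
        hGd.hasFDerivAt.isLittleO
      have h2 := h1.comp_tendsto (hφt v)
      have h3 : (fun t : ℝ => φ (x₀ + t • v) - y₀) =O[𝓝[>] 0] (fun t : ℝ => t) := by
        rw [Asymptotics.isBigO_iff]
        refine ⟨c * ‖v‖, ?_⟩
        filter_upwards [hmemU v, self_mem_nhdsWithin] with t htU ht
        have ht : (0:ℝ) < t := ht
        have h2' := (hbl _ htU _ hx₀).2
        rw [hnorm_seg v t ht] at h2'
        rw [Real.norm_eq_abs, abs_of_pos ht]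
        calc ‖φ (x₀ + t • v) - y₀‖ ≤ c * (t * ‖v‖) := h2'
          _ = c * ‖v‖ * t := by ring
      have h4 := h2.trans_isBigO h3
      rw [NormedAddCommGroup.tendsto_nhds_zero]
      intro ε hε
      have h5 := (Asymptotics.isLittleO_iff.1 h4) (c := ε/2) (by positivity)
      filter_upwards [h5, self_mem_nhdsWithin] with t h ht
      have ht : (0:ℝ) < t := ht
      rw [norm_smul, Real.norm_eq_abs, abs_inv, abs_of_pos ht]
      rw [Real.norm_eq_abs, abs_of_pos ht] at h
      calc t⁻¹ * ‖G ((fun t : ℝ => φ (x₀ + t • v)) t) - G y₀ - B (φ (x₀ + t • v) - y₀)‖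
          ≤ t⁻¹ * (ε/2 * t) := by
            exact mul_le_mul_of_nonneg_left (by simpa using h) (inv_nonneg.2 ht.le)
        _ = ε/2 := by field_simp
        _ < ε := by linarith
    -- combine
    have heq : ∀ t : ℝ, B (ψ t v) =
        t⁻¹ • (G (φ (x₀ + t • v)) - G y₀) -
          t⁻¹ • (G (φ (x₀ + t • v)) - G y₀ - B (φ (x₀ + t • v) - y₀)) := by
      intro t
      rw [← smul_sub, sub_sub_cancel]
      show B (t⁻¹ • (φ (x₀ + t • v) - φ x₀)) = t⁻¹ • B (φ (x₀ + t • v) - y₀)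
      rw [map_smul]
    have := hGz.sub ho
    rw [sub_zero] at this
    exact Tendsto.congr (fun t => (heq t).symm) this
  -- Step B: ultrafilter limit d
  set l := 𝓝[>] (0:ℝ) with hl
  have : l.NeBot := nhdsGT_neBot 0
  set 𝒰 : Ultrafilter ℝ := Ultrafilter.of l with h𝒰
  have hUle : (𝒰 : Filter ℝ) ≤ l := Ultrafilter.of_le l
  have hex : ∀ v : Eucl n, ∃ w, Tendsto (fun t => ψ t v) (𝒰 : Filter ℝ) (𝓝 w) := by
    intro v
    have hmem : closedBall (0 : Eucl n) (c * ‖v‖) ∈ Ultrafilter.map (fun t => ψ t v) 𝒰 := by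
      rw [Ultrafilter.mem_map]
      have : {t | ψ t v ∈ closedBall 0 (c * ‖v‖)} ∈ l := by
        filter_upwards [hψbound v] with t h
        simpa [mem_closedBall, dist_eq_norm] using h
      exact hUle this
    obtain ⟨w, _, hw⟩ := (isCompact_closedBall (0 : Eucl n) (c * ‖v‖)).ultrafilter_le_nhds
      (Ultrafilter.map (fun t => ψ t v) 𝒰) (le_principal_iff.2 hmem)
    exact ⟨w, hw⟩
  choose d hd using hex
  -- antilipschitz on pairs
  have hanti : ∀ u w : Eucl n, ‖u - w‖ ≤ c * ‖d u - d w‖ := by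
    intro u w
    have hb : ∀ᶠ t in l, (1/c) * ‖u - w‖ ≤ ‖ψ t u - ψ t w‖ := by
      filter_upwards [hmemU u, hmemU w, self_mem_nhdsWithin] with t htu htw ht
      have ht : (0:ℝ) < t := ht
      have h1 := (hbl _ htu _ htw).1
      have hdiff : ψ t u - ψ t w = t⁻¹ • (φ (x₀ + t • u) - φ (x₀ + t • w)) := by
        rw [hψ]; simp only [smul_sub]; abel
      have hab : ‖x₀ + t • u - (x₀ + t • w)‖ = t * ‖u - w‖ := by
        have : x₀ + t • u - (x₀ + t • w) = t • (u - w) := by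
          rw [smul_sub]; abel
        rw [this, norm_smul, Real.norm_eq_abs, abs_of_pos ht]
      rw [hab] at h1
      rw [hdiff, norm_smul, Real.norm_eq_abs, abs_inv, abs_of_pos ht]
      calc (1/c) * ‖u - w‖ = t⁻¹ * ((1/c) * (t * ‖u - w‖)) := by field_simp
        _ ≤ t⁻¹ * ‖φ (x₀ + t • u) - φ (x₀ + t • w)‖ :=
            mul_le_mul_of_nonneg_left h1 (inv_nonneg.2 ht.le)
    have hlim : Tendsto (fun t => ‖ψ t u - ψ t w‖) (𝒰 : Filter ℝ) (𝓝 ‖d u - d w‖) :=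
      ((hd u).sub (hd w)).norm
    have := ge_of_tendsto hlim (hb.filter_mono hUle)
    -- this : 1/c * ‖u - w‖ ≤ ‖d u - d w‖
    calc ‖u - w‖ = c * ((1/c) * ‖u - w‖) := by field_simp
      _ ≤ c * ‖d u - d w‖ := mul_le_mul_of_nonneg_left this hc0.le
  -- d maps K₁ into K₂
  obtain ⟨α, hα0, hαd⟩ := infDist_ker_le B
  have hdmem : ∀ v ∈ K₁, d v ∈ K₂ := by
    intro v hv
    have hAv : A v = 0 := LinearMap.mem_ker.1 hv
    have h0 : Tendsto (fun t => infDist (ψ t v) (K₂ : Set (Eucl n))) l (𝓝 0) := by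
      have hb : ∀ᶠ t in l, infDist (ψ t v) (K₂ : Set (Eucl n)) ≤ α * ‖B (ψ t v)‖ := by
        filter_upwards [] with t; exact hαd _
      have hg : Tendsto (fun t => α * ‖B (ψ t v)‖) l (𝓝 0) := by
        have := ((hBz v hAv).norm.const_mul α); simpa using this
      exact squeeze_zero (fun t => infDist_nonneg) (fun t => hαd _) hg
    have h1 : Tendsto (fun t => infDist (ψ t v) (K₂ : Set (Eucl n))) (𝒰 : Filter ℝ)
        (𝓝 (infDist (d v) (K₂ : Set (Eucl n)))) :=
      ((continuous_infDist_pt (K₂ : Set (Eucl n))).tendsto _).comp (hd v)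
    have h2 : infDist (d v) (K₂ : Set (Eucl n)) = 0 :=
      tendsto_nhds_unique h1 (h0.mono_left hUle)
    have hcl : IsClosed (K₂ : Set (Eucl n)) := Submodule.closed_of_finiteDimensional K₂
    exact (hcl.mem_iff_infDist_zero ⟨0, K₂.zero_mem⟩).2 h2
  -- dimension count
  set g : ↥K₁ → Eucl n := fun v => d ↑v with hg
  have hga : AntilipschitzWith (⟨c, hc0.le⟩ : NNReal) g := by
    apply AntilipschitzWith.of_le_mul_dist
    intro x y
    have := hanti (x : Eucl n) (y : Eucl n)
    simp only [hg, dist_eq_norm]; exact this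
  have h1 : dimH (univ : Set K₁) = (finrank ℝ K₁ : ℝ≥0∞) := Real.dimH_univ_eq_finrank K₁
  have h2 : dimH (univ : Set K₁) ≤ dimH (g '' univ) := hga.le_dimH_image univ
  have h3 : g '' univ ⊆ (K₂ : Set (Eucl n)) := by
    rintro _ ⟨v, -, rfl⟩
    exact hdmem v v.2
  have h4 : dimH (g '' univ) ≤ dimH (K₂ : Set (Eucl n)) := dimH_mono h3
  have h5 : dimH (K₂ : Set (Eucl n)) = (finrank ℝ K₂ : ℝ≥0∞) := dimH_submodule K₂
  have : (finrank ℝ K₁ : ℝ≥0∞) ≤ (finrank ℝ K₂ : ℝ≥0∞) := by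
    rw [← h1, ← h5]; exact h2.trans h4
  exact_mod_cast this

lemma rank_lt_iff_of_ker_eq {n p : ℕ} (f g : Eucl n →L[ℝ] Eucl p)
    (h : finrank ℝ (LinearMap.ker (f : Eucl n →ₗ[ℝ] Eucl p)) = finrank ℝ (LinearMap.ker (g : Eucl n →ₗ[ℝ] Eucl p))) :
    (LinearMap.rank ((f : Eucl n →L[ℝ] Eucl p) : Eucl n →ₗ[ℝ] Eucl p) < (p : Cardinal) ↔
      LinearMap.rank ((g : Eucl n →L[ℝ] Eucl p) : Eucl n →ₗ[ℝ] Eucl p) < (p : Cardinal)) := by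
  have hf := LinearMap.finrank_range_add_finrank_ker ((f : Eucl n →L[ℝ] Eucl p) : Eucl n →ₗ[ℝ] Eucl p)
  have hg := LinearMap.finrank_range_add_finrank_ker ((g : Eucl n →L[ℝ] Eucl p) : Eucl n →ₗ[ℝ] Eucl p)
  have hn : finrank ℝ (Eucl n) = n := finrank_euclideanSpace_fin
  rw [hn] at hf hg
  have hkf : LinearMap.ker ((f : Eucl n →L[ℝ] Eucl p) : Eucl n →ₗ[ℝ] Eucl p) = LinearMap.ker (f : Eucl n →ₗ[ℝ] Eucl p) := rfl
  have hkg : LinearMap.ker ((g : Eucl n →L[ℝ] Eucl p) : Eucl n →ₗ[ℝ] Eucl p) = LinearMap.ker (g : Eucl n →ₗ[ℝ] Eucl p) := rfl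
  rw [hkf] at hf
  rw [hkg] at hg
  have hrf : LinearMap.rank ((f : Eucl n →L[ℝ] Eucl p) : Eucl n →ₗ[ℝ] Eucl p)
      = (finrank ℝ (LinearMap.range ((f : Eucl n →L[ℝ] Eucl p) : Eucl n →ₗ[ℝ] Eucl p)) : Cardinal) :=
    (Module.finrank_eq_rank ℝ _).symm
  have hrg : LinearMap.rank ((g : Eucl n →L[ℝ] Eucl p) : Eucl n →ₗ[ℝ] Eucl p)
      = (finrank ℝ (LinearMap.range ((g : Eucl n →L[ℝ] Eucl p) : Eucl n →ₗ[ℝ] Eucl p)) : Cardinal) :=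
    (Module.finrank_eq_rank ℝ _).symm
  rw [hrf, hrg, Nat.cast_lt, Nat.cast_lt]
  omega


/-- if `F ≈ G` via a lipeomorphism `φ` (at every point of `U`), then
`φ (Sing F) = Sing G`. -/
theorem image_singSet_of_asympLipEquiv {n p : ℕ}
    (U V : Set (Eucl n)) (hU : IsOpen U) (hV : IsOpen V)
    (F G : Eucl n → Eucl p)
    (hF : ∀ y ∈ U, DifferentiableAt ℝ F y) (hG : ∀ y ∈ V, DifferentiableAt ℝ G y)
    (φ : Eucl n → Eucl n) (hφ : IsLipeoOn φ U V)
    (hequiv : ∀ x ∈ U, AsympLipEquivAtVia F G φ x) :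
    φ '' SingSet F U = SingSet G V := by
  simp only [SingSet]
  obtain ⟨hbij, c, hc, hbl⟩ := hφ
  have hc0 : (0:ℝ) < c := lt_of_lt_of_le one_pos hc
  set ψ := Function.invFunOn φ U with hψdef
  have hinv : Set.InvOn ψ φ U V := hbij.invOn_invFunOn
  have hψmem : Set.MapsTo ψ V U := hbij.surjOn.mapsTo_invFunOn
  -- bilipschitz bounds for ψ on V
  have hblψ : ∀ a ∈ V, ∀ b ∈ V, (1/c) * ‖a - b‖ ≤ ‖ψ a - ψ b‖ ∧ ‖ψ a - ψ b‖ ≤ c * ‖a - b‖ := by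
    intro a ha b hb
    have h1 := hbl (ψ a) (hψmem ha) (ψ b) (hψmem hb)
    rw [hinv.2 ha, hinv.2 hb] at h1
    constructor
    · rw [div_mul_eq_mul_div, div_le_iff₀ hc0, one_mul]
      calc ‖a - b‖ ≤ c * ‖ψ a - ψ b‖ := by
            have := h1.1
            rw [div_mul_eq_mul_div, div_le_iff₀ hc0, one_mul] at this
            linarith [this]
        _ = ‖ψ a - ψ b‖ * c := by ring
    · calc ‖ψ a - ψ b‖ = c * ((1/c) * ‖ψ a - ψ b‖) := by field_simp
        _ ≤ c * ‖a - b‖ := mul_le_mul_of_nonneg_left h1.1 hc0.le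
  -- kernels match
  have hker : ∀ x ∈ U, finrank ℝ (LinearMap.ker (fderiv ℝ F x : Eucl n →ₗ[ℝ] Eucl p))
      = finrank ℝ (LinearMap.ker (fderiv ℝ G (φ x) : Eucl n →ₗ[ℝ] Eucl p)) := by
    intro x hx
    obtain ⟨c', hc', hev⟩ := hequiv x hx
    have hc'0 : (0:ℝ) < c' := lt_of_lt_of_le one_pos hc'
    have hφx : φ x ∈ V := hbij.mapsTo hx
    refine le_antisymm ?_ ?_
    · exact key_finrank_ker_le hU hx (hF x hx) (hG _ hφx) hc hbl
        (by filter_upwards [hev] with x' h using h.2)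
    · -- reverse direction via ψ
      have hψφx : ψ (φ x) = x := hinv.1 hx
      -- build the eventual bound for (G, F, ψ) at φ x
      obtain ⟨r, hr0, hball⟩ := Metric.eventually_nhds_iff_ball.1 hev
      have hev' : ∀ᶠ y in 𝓝 (φ x), ‖F (ψ y) - F (ψ (φ x))‖ ≤ c' * ‖G y - G (φ x)‖ := by
        have hmem : V ∩ Metric.ball (φ x) (r / c) ∈ 𝓝 (φ x) :=
          Filter.inter_mem (hV.mem_nhds hφx)
            (Metric.ball_mem_nhds _ (by positivity))
        filter_upwards [hmem] with y ⟨hyV, hyball⟩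
        have hxy : ψ y ∈ U := hψmem hyV
        have hclose : ψ y ∈ Metric.ball x r := by
          rw [Metric.mem_ball, dist_eq_norm]
          have h2 := (hblψ y hyV (φ x) hφx).2
          rw [hψφx] at h2
          have : ‖y - φ x‖ < r / c := by
            rw [Metric.mem_ball, dist_eq_norm] at hyball; exact hyball
          calc ‖ψ y - x‖ ≤ c * ‖y - φ x‖ := h2
            _ < c * (r / c) := by exact mul_lt_mul_of_pos_left this hc0
            _ = r := by field_simp
        have h3 := (hball _ hclose).1
        rw [hinv.2 hyV] at h3
        rw [hψφx]
        calc ‖F (ψ y) - F x‖ = c' * ((1/c') * ‖F (ψ y) - F x‖) := by field_simp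
          _ ≤ c' * ‖G y - G (φ x)‖ := mul_le_mul_of_nonneg_left h3 hc'0.le
      have := key_finrank_ker_le hV hφx (hG _ hφx)
        (by rw [hψφx]; exact hF x hx) hc hblψ hev'
      rwa [hψφx] at this
  -- conclude
  ext y
  constructor
  · rintro ⟨x, ⟨hxU, hxr⟩, rfl⟩
    exact ⟨hbij.mapsTo hxU, (rank_lt_iff_of_ker_eq _ _ (hker x hxU)).1 hxr⟩
  · rintro ⟨hyV, hyr⟩
    obtain ⟨x, hxU, rfl⟩ := hbij.surjOn hyV
    exact ⟨x, ⟨hxU, (rank_lt_iff_of_ker_eq _ _ (hker x hxU)).2 hyr⟩, rfl⟩
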